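/- arXiv:1811.02229 — 4 statements merged into one kernel-verified Lean document; each statement's English description precedes it below -/
import Mathlib

section
/- Let m ≥ 2 and let S be a real symmetric m×m matrix with Σ_{i,j=1}^m S_{ij} = 0. Then there exist a unique real symmetric (m−1)×(m−1) matrix S̃ and unique real numbers d₁,…,d_{m−1} such that S equals the matrix obtained by embedding S̃ in the bottom-right (m−1)×(m−1) block (with zeros in the first row and column), minus the matrix obtained by embedding S̃ in the top-left (m−1)×(m−1) block (with zeros in the last row and column), plus Σ_{ℓ=1}^{m−1} d_ℓ E_ℓ, where E_ℓ is the m×m matrix with entries (E_ℓ)_{11} = (E_ℓ)_{1+ℓ,1+ℓ} = 1, (E_ℓ)_{1,1+ℓ} = (E_ℓ)_{1+ℓ,1} = −1, and all other entries zero. -/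
/-- Embedding of an `(m-1) × (m-1)` matrix into the bottom-right block of an
`m × m` matrix (with zeros in the first row and column), `m = n + 2`. -/
noncomputable def embedBR {n : ℕ} (S : Matrix (Fin (n + 1)) (Fin (n + 1)) ℝ) :
    Matrix (Fin (n + 2)) (Fin (n + 2)) ℝ :=
  Matrix.of fun i j =>
    if hi : 0 < i.val then
      if hj : 0 < j.val then
        S ⟨i.val - 1, by have := i.isLt; omega⟩ ⟨j.val - 1, by have := j.isLt; omega⟩
      else 0
    else 0

/-- Embedding of an `(m-1) × (m-1)` matrix into the top-left block of an
`m × m` matrix (with zeros in the last row and column), `m = n + 2`. -/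
noncomputable def embedTL {n : ℕ} (S : Matrix (Fin (n + 1)) (Fin (n + 1)) ℝ) :
    Matrix (Fin (n + 2)) (Fin (n + 2)) ℝ :=
  Matrix.of fun i j =>
    if hi : i.val < n + 1 then
      if hj : j.val < n + 1 then S ⟨i.val, hi⟩ ⟨j.val, hj⟩ else 0
    else 0

/-- The matrix `E_ℓ` of the quadratic form `(v₁ - v_{1+ℓ})²`:
entries `1` at `(1,1)` and `(1+ℓ,1+ℓ)`, `-1` at `(1,1+ℓ)` and `(1+ℓ,1)`, `0` elsewhere. -/
noncomputable def Emat {n : ℕ} (ℓ : Fin (n + 1)) : Matrix (Fin (n + 2)) (Fin (n + 2)) ℝ :=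
  Matrix.of fun i j =>
    if i = 0 ∧ j = 0 then 1
    else if i = ℓ.succ ∧ j = ℓ.succ then 1
    else if (i = 0 ∧ j = ℓ.succ) ∨ (i = ℓ.succ ∧ j = 0) then -1
    else 0



open Finset

/-- tail sum along a diagonal starting at (i,j), going down-right to the edge. -/
noncomputable def tl {n : ℕ} (S : Matrix (Fin (n + 2)) (Fin (n + 2)) ℝ) (i j : ℕ) : ℝ :=
  ∑ k ∈ Finset.range (n + 2 - max i j),
    if h : i + k < n + 2 ∧ j + k < n + 2 then S ⟨i + k, h.1⟩ ⟨j + k, h.2⟩ else 0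

lemma tl_zero {n : ℕ} (S : Matrix (Fin (n + 2)) (Fin (n + 2)) ℝ) {i j : ℕ}
    (h : n + 2 ≤ max i j) : tl S i j = 0 := by
  unfold tl
  rw [Nat.sub_eq_zero_of_le h]
  simp

lemma tl_rec {n : ℕ} (S : Matrix (Fin (n + 2)) (Fin (n + 2)) ℝ) {i j : ℕ}
    (hi : i ≤ n + 1) (hj : j ≤ n + 1) :
    tl S i j = S ⟨i, by omega⟩ ⟨j, by omega⟩ + tl S (i + 1) (j + 1) := by
  unfold tl
  have hm : n + 2 - max i j = (n + 2 - max (i + 1) (j + 1)) + 1 := by omega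
  rw [hm, Finset.sum_range_succ']
  have h0 : (if h : i + 0 < n + 2 ∧ j + 0 < n + 2 then S ⟨i + 0, h.1⟩ ⟨j + 0, h.2⟩ else 0)
      = S ⟨i, by omega⟩ ⟨j, by omega⟩ := by
    rw [dif_pos (by omega)]
    congr 1
  rw [h0, add_comm]
  congr 1
  apply Finset.sum_congr rfl
  intro k _
  simp only [show ∀ m : ℕ, m + (k + 1) = m + 1 + k from fun m => by omega]

lemma tl_symm {n : ℕ} {S : Matrix (Fin (n + 2)) (Fin (n + 2)) ℝ} (hS : S.IsSymm)
    (i j : ℕ) : tl S i j = tl S j i := by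
  unfold tl
  rw [Nat.max_comm]
  apply Finset.sum_congr rfl
  intro k _
  by_cases h : i + k < n + 2 ∧ j + k < n + 2
  · rw [dif_pos h, dif_pos (And.intro h.2 h.1), ← hS.apply]
  · rw [dif_neg h, dif_neg (fun h' => h ⟨h'.2, h'.1⟩)]

/-- generic triangle swap -/
lemma tri (N : ℕ) (f : ℕ → ℕ → ℝ) :
    ∑ i ∈ range N, ∑ j ∈ range (N - i), f i j
      = ∑ j ∈ range N, ∑ i ∈ range (N - j), f i j := by
  have h : ∀ g : ℕ → ℕ → ℝ, ∀ i, ∑ j ∈ range (N - i), g i j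
      = ∑ j ∈ range N, if i + j < N then g i j else 0 := by
    intro g i
    rw [Finset.sum_ite, Finset.sum_const_zero, add_zero]
    congr 1
    ext x
    simp only [Finset.mem_filter, Finset.mem_range]
    omega
  rw [Finset.sum_congr rfl fun i _ => h f i, Finset.sum_comm,
    Finset.sum_congr rfl fun j _ => ?_]
  rw [h (fun j i => f i j) j]
  apply Finset.sum_congr rfl
  intro i _
  rw [Nat.add_comm j i]
noncomputable def dd {n : ℕ} (S : Matrix (Fin (n + 2)) (Fin (n + 2)) ℝ) (ℓ : Fin (n + 1)) : ℝ :=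
  -tl S 0 (ℓ.val + 1)

noncomputable def TT {n : ℕ} (S : Matrix (Fin (n + 2)) (Fin (n + 2)) ℝ) :
    Matrix (Fin (n + 1)) (Fin (n + 1)) ℝ :=
  Matrix.of fun a b =>
    tl S (a.val + 1) (b.val + 1) +
      if a = b then ∑ k ∈ Finset.range (n + 1 - a.val), tl S 0 (a.val + 1 + k) else 0

lemma TT_isSymm {n : ℕ} {S : Matrix (Fin (n + 2)) (Fin (n + 2)) ℝ} (hS : S.IsSymm) :
    (TT S).IsSymm := by
  apply Matrix.IsSymm.ext
  intro a b
  simp only [TT, Matrix.of_apply]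
  rw [tl_symm hS]
  by_cases h : a = b
  · subst h; rfl
  · rw [if_neg h, if_neg (fun h' => h h'.symm)]

lemma embedBR_zero_left {n : ℕ} (T : Matrix (Fin (n + 1)) (Fin (n + 1)) ℝ) (j : Fin (n + 2)) :
    embedBR T 0 j = 0 := by simp [embedBR]

lemma embedBR_zero_right {n : ℕ} (T : Matrix (Fin (n + 1)) (Fin (n + 1)) ℝ) (i : Fin (n + 2)) :
    embedBR T i 0 = 0 := by
  simp only [embedBR, Matrix.of_apply]
  split <;> simp

lemma embedBR_succ_succ {n : ℕ} (T : Matrix (Fin (n + 1)) (Fin (n + 1)) ℝ) (i j : Fin (n + 1)) :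
    embedBR T i.succ j.succ = T i j := by
  simp only [embedBR, Matrix.of_apply, Fin.val_succ]
  rw [dif_pos (by omega), dif_pos (by omega)]
  congr 1

lemma embedTL_zero_zero {n : ℕ} (T : Matrix (Fin (n + 1)) (Fin (n + 1)) ℝ) :
    embedTL T 0 0 = T 0 0 := by
  simp only [embedTL, Matrix.of_apply]
  rw [dif_pos (by simp), dif_pos (by simp)]
  congr 1

lemma embedTL_zero_succ {n : ℕ} (T : Matrix (Fin (n + 1)) (Fin (n + 1)) ℝ) (j : Fin (n + 1)) :
    embedTL T 0 j.succ = if h : j.val + 1 < n + 1 then T 0 ⟨j.val + 1, h⟩ else 0 := by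
  simp only [embedTL, Matrix.of_apply, Fin.val_succ]
  rw [dif_pos (by simp)]
  by_cases h : j.val + 1 < n + 1
  · rw [dif_pos h, dif_pos h]
    congr 1
  · rw [dif_neg h, dif_neg h]

lemma embedTL_succ_zero {n : ℕ} (T : Matrix (Fin (n + 1)) (Fin (n + 1)) ℝ) (i : Fin (n + 1)) :
    embedTL T i.succ 0 = if h : i.val + 1 < n + 1 then T ⟨i.val + 1, h⟩ 0 else 0 := by
  simp only [embedTL, Matrix.of_apply, Fin.val_succ]
  by_cases h : i.val + 1 < n + 1
  · rw [dif_pos h, dif_pos (by simp), dif_pos h]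
    congr 1
  · rw [dif_neg h, dif_neg h]

lemma embedTL_succ_succ {n : ℕ} (T : Matrix (Fin (n + 1)) (Fin (n + 1)) ℝ) (i j : Fin (n + 1)) :
    embedTL T i.succ j.succ =
      if h : i.val + 1 < n + 1 ∧ j.val + 1 < n + 1 then T ⟨i.val + 1, h.1⟩ ⟨j.val + 1, h.2⟩
      else 0 := by
  simp only [embedTL, Matrix.of_apply, Fin.val_succ]
  by_cases hi : i.val + 1 < n + 1
  · rw [dif_pos hi]
    by_cases hj : j.val + 1 < n + 1
    · rw [dif_pos hj, dif_pos (⟨hi, hj⟩ : i.val + 1 < n + 1 ∧ j.val + 1 < n + 1)]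
    · rw [dif_neg hj, dif_neg (fun h : _ ∧ _ => hj h.2)]
  · rw [dif_neg hi, dif_neg (fun h : _ ∧ _ => hi h.1)]
lemma sumE_zero_succ {n : ℕ} (d : Fin (n + 1) → ℝ) (j : Fin (n + 1)) :
    (∑ ℓ : Fin (n + 1), d ℓ • Emat ℓ) (0 : Fin (n + 2)) j.succ = -d j := by
  rw [Matrix.sum_apply]
  have : ∀ ℓ : Fin (n + 1), (d ℓ • Emat ℓ) (0 : Fin (n + 2)) j.succ
      = if ℓ = j then -d ℓ else 0 := by
    intro ℓ
    by_cases h : ℓ = j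
    · subst h
      simp [Emat, (Fin.succ_ne_zero ℓ), (Fin.succ_ne_zero ℓ).symm]
    · simp only [Emat, Matrix.smul_apply, Matrix.of_apply, smul_eq_mul]
      rw [if_neg (by simp [(Fin.succ_ne_zero j)]), if_neg (by simp [(Fin.succ_ne_zero ℓ).symm]),
        if_neg, if_neg h, mul_zero]
      rintro (⟨-, hc⟩ | ⟨hc, -⟩)
      · exact h (Fin.succ_injective _ hc).symm
      · exact (Fin.succ_ne_zero ℓ) hc.symm
  rw [Finset.sum_congr rfl fun ℓ _ => this ℓ, Finset.sum_ite_eq' Finset.univ j (fun ℓ => -d ℓ)]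
  simp

lemma sumE_zero_zero {n : ℕ} (d : Fin (n + 1) → ℝ) :
    (∑ ℓ : Fin (n + 1), d ℓ • Emat ℓ) (0 : Fin (n + 2)) 0 = ∑ ℓ, d ℓ := by
  rw [Matrix.sum_apply]
  exact Finset.sum_congr rfl fun ℓ _ => by simp [Emat]

lemma sumE_succ_zero {n : ℕ} (d : Fin (n + 1) → ℝ) (i : Fin (n + 1)) :
    (∑ ℓ : Fin (n + 1), d ℓ • Emat ℓ) i.succ (0 : Fin (n + 2)) = -d i := by
  rw [Matrix.sum_apply]
  have : ∀ ℓ : Fin (n + 1), (d ℓ • Emat ℓ) i.succ (0 : Fin (n + 2))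
      = if ℓ = i then -d ℓ else 0 := by
    intro ℓ
    by_cases h : ℓ = i
    · subst h
      simp [Emat, (Fin.succ_ne_zero ℓ), (Fin.succ_ne_zero ℓ).symm]
    · simp only [Emat, Matrix.smul_apply, Matrix.of_apply, smul_eq_mul]
      rw [if_neg (by simp [(Fin.succ_ne_zero i)]), if_neg (by simp [(Fin.succ_ne_zero ℓ).symm]),
        if_neg, if_neg h, mul_zero]
      rintro (⟨hc, -⟩ | ⟨hc, -⟩)
      · exact (Fin.succ_ne_zero i) hc
      · exact h (Fin.succ_injective _ hc).symm
  rw [Finset.sum_congr rfl fun ℓ _ => this ℓ, Finset.sum_ite_eq' Finset.univ i (fun ℓ => -d ℓ)]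
  simp

lemma sumE_succ_succ {n : ℕ} (d : Fin (n + 1) → ℝ) (i j : Fin (n + 1)) :
    (∑ ℓ : Fin (n + 1), d ℓ • Emat ℓ) i.succ j.succ = if i = j then d i else 0 := by
  rw [Matrix.sum_apply]
  have : ∀ ℓ : Fin (n + 1), (d ℓ • Emat ℓ) i.succ j.succ
      = if ℓ = i then (if i = j then d i else 0) else 0 := by
    intro ℓ
    by_cases h : ℓ = i
    · subst h
      by_cases hij : ℓ = j
      · subst hij
        simp [Emat, (Fin.succ_ne_zero ℓ), (Fin.succ_ne_zero ℓ).symm]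
      · simp only [Emat, Matrix.smul_apply, Matrix.of_apply, smul_eq_mul]
        rw [if_neg (by simp [(Fin.succ_ne_zero ℓ)]),
          if_neg (fun hc => hij (Fin.succ_injective _ hc.2).symm),
          if_neg (by rintro (⟨hc, -⟩ | ⟨-, hc⟩) <;> exact (Fin.succ_ne_zero _) hc), mul_zero]
        simp [hij]
    · simp only [Emat, Matrix.smul_apply, Matrix.of_apply, smul_eq_mul]
      rw [if_neg (by simp [(Fin.succ_ne_zero i)]),
        if_neg (fun hc => h (Fin.succ_injective _ hc.1).symm),
        if_neg (by rintro (⟨hc, -⟩ | ⟨-, hc⟩) <;> exact (Fin.succ_ne_zero _) hc),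
        if_neg h, mul_zero]
  rw [Finset.sum_congr rfl fun ℓ _ => this ℓ, Finset.sum_ite_eq' Finset.univ i]
  simp
lemma sumL {n : ℕ} (S : Matrix (Fin (n + 2)) (Fin (n + 2)) ℝ) :
    tl S 0 0 + ∑ k ∈ range (n + 1), (tl S 0 (k + 1) + tl S (k + 1) 0)
      = ∑ i, ∑ j, S i j := by
  set f : ℕ → ℕ → ℝ :=
    fun i j => if h : i < n + 2 ∧ j < n + 2 then S ⟨i, h.1⟩ ⟨j, h.2⟩ else 0 with hf
  have htl : ∀ i j, tl S i j = ∑ k ∈ range (n + 2 - max i j), f (i + k) (j + k) :=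
    fun i j => rfl
  -- right side as a double range sum
  have hR : (∑ i, ∑ j, S i j) = ∑ i ∈ range (n + 2), ∑ j ∈ range (n + 2), f i j := by
    rw [show (∑ i, ∑ j, S i j)
        = ∑ i : Fin (n + 2), (fun i' : ℕ => ∑ j ∈ range (n + 2), f i' j) i.val from ?_]
    · exact Fin.sum_univ_eq_sum_range (fun i' : ℕ => ∑ j ∈ range (n + 2), f i' j) (n + 2)
    · apply Finset.sum_congr rfl
      intro i _
      rw [show (∑ j, S i j) = ∑ j : Fin (n + 2), (fun j' : ℕ => f i.val j') j.val from ?_]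
      · exact Fin.sum_univ_eq_sum_range (fun j' : ℕ => f i.val j') (n + 2)
      · apply Finset.sum_congr rfl
        intro j _
        simp only [hf]
        rw [dif_pos ⟨i.isLt, j.isLt⟩]
  -- split each row at the diagonal
  have hrow : ∀ i ∈ range (n + 2), ∑ j ∈ range (n + 2), f i j
      = ∑ j ∈ range i, f i j + ∑ o ∈ range (n + 2 - i), f i (i + o) := by
    intro i hi
    rw [Finset.mem_range] at hi
    rw [← Finset.sum_range_add_sum_Ico _ (le_of_lt hi), Finset.sum_Ico_eq_sum_range]
  have hsplit : ∑ x ∈ range (n + 2), (∑ j ∈ range x, f x j + ∑ o ∈ range (n + 2 - x), f x (x + o))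
      = (∑ x ∈ range (n + 2), ∑ j ∈ range x, f x j)
        + ∑ x ∈ range (n + 2), ∑ o ∈ range (n + 2 - x), f x (x + o) :=
    Finset.sum_add_distrib
  -- upper (including diagonal) part
  have hA : ∑ i ∈ range (n + 2), ∑ o ∈ range (n + 2 - i), f i (i + o)
      = tl S 0 0 + ∑ k ∈ range (n + 1), tl S 0 (k + 1) := by
    rw [tri (n + 2) (fun i o => f i (i + o))]
    have : ∀ o ∈ range (n + 2), ∑ i ∈ range (n + 2 - o), f i (i + o) = tl S 0 o := by
      intro o _
      rw [htl 0 o]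
      have hmax : max 0 o = o := Nat.max_eq_right (Nat.zero_le o)
      rw [hmax]
      apply Finset.sum_congr rfl
      intro k _
      simp only [Nat.zero_add, Nat.add_comm k o]
    rw [Finset.sum_congr rfl this, Finset.sum_range_succ']
    ring
  -- strictly lower part
  have hB : ∑ i ∈ range (n + 2), ∑ j ∈ range i, f i j
      = ∑ k ∈ range (n + 1), tl S (k + 1) 0 := by
    have h1 : ∀ i ∈ range (n + 2), ∑ j ∈ range i, f i j
        = ∑ j ∈ range (n + 2), if j < i then f i j else 0 := by
      intro i hi
      rw [Finset.mem_range] at hi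
      rw [Finset.sum_ite, Finset.sum_const_zero, add_zero]
      congr 1
      ext x
      simp only [Finset.mem_filter, Finset.mem_range]
      omega
    rw [Finset.sum_congr rfl h1, Finset.sum_comm]
    have h2 : ∀ j ∈ range (n + 2), (∑ i ∈ range (n + 2), if j < i then f i j else 0)
        = ∑ i ∈ Finset.Ico (j + 1) (n + 2), f i j := by
      intro j _
      rw [Finset.sum_ite, Finset.sum_const_zero, add_zero]
      congr 1
      ext x
      simp only [Finset.mem_filter, Finset.mem_range, Finset.mem_Ico]
      omega
    rw [Finset.sum_congr rfl h2, Finset.sum_range_succ,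
      show Finset.Ico (n + 1 + 1) (n + 2) = ∅ from by simp, Finset.sum_empty, add_zero]
    have h3 : ∀ t ∈ range (n + 1), ∑ i ∈ Finset.Ico (t + 1) (n + 2), f i t
        = ∑ o ∈ range (n + 1 - t), f (t + 1 + o) t := by
      intro t _
      rw [Finset.sum_Ico_eq_sum_range]
      apply Finset.sum_congr (by congr 1; omega) (fun o _ => rfl)
    rw [Finset.sum_congr rfl h3, ← tri (n + 1) (fun o t => f (t + 1 + o) t)]
    apply Finset.sum_congr rfl
    intro k _
    rw [htl (k + 1) 0]
    have hmax : max (k + 1) 0 = k + 1 := Nat.max_eq_left (Nat.zero_le _)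
    rw [hmax, show n + 2 - (k + 1) = n + 1 - k from by omega]
    apply Finset.sum_congr rfl
    intro t _
    simp only [Nat.zero_add]
    congr 1
    omega
  rw [hR, Finset.sum_congr rfl hrow, hsplit, hA, hB, Finset.sum_add_distrib]
  ring
noncomputable def Phi {n : ℕ} (T : Matrix (Fin (n + 1)) (Fin (n + 1)) ℝ)
    (d : Fin (n + 1) → ℝ) : Matrix (Fin (n + 2)) (Fin (n + 2)) ℝ :=
  embedBR T - embedTL T + ∑ ℓ : Fin (n + 1), d ℓ • Emat ℓ

lemma Phi_zero_zero {n : ℕ} (T : Matrix (Fin (n + 1)) (Fin (n + 1)) ℝ)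
    (d : Fin (n + 1) → ℝ) : Phi T d 0 0 = -T 0 0 + ∑ ℓ, d ℓ := by
  simp only [Phi, Matrix.add_apply, Matrix.sub_apply, embedBR_zero_left,
    embedTL_zero_zero, sumE_zero_zero, zero_sub]

lemma Phi_zero_succ {n : ℕ} (T : Matrix (Fin (n + 1)) (Fin (n + 1)) ℝ)
    (d : Fin (n + 1) → ℝ) (j : Fin (n + 1)) :
    Phi T d 0 j.succ
      = -(if h : j.val + 1 < n + 1 then T 0 ⟨j.val + 1, h⟩ else 0) - d j := by
  simp only [Phi, Matrix.add_apply, Matrix.sub_apply, embedBR_zero_left,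
    embedTL_zero_succ, sumE_zero_succ, zero_sub]
  ring

lemma Phi_succ_zero {n : ℕ} (T : Matrix (Fin (n + 1)) (Fin (n + 1)) ℝ)
    (d : Fin (n + 1) → ℝ) (i : Fin (n + 1)) :
    Phi T d i.succ 0
      = -(if h : i.val + 1 < n + 1 then T ⟨i.val + 1, h⟩ 0 else 0) - d i := by
  simp only [Phi, Matrix.add_apply, Matrix.sub_apply, embedBR_zero_right,
    embedTL_succ_zero, sumE_succ_zero, zero_sub]
  ring

lemma Phi_succ_succ {n : ℕ} (T : Matrix (Fin (n + 1)) (Fin (n + 1)) ℝ)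
    (d : Fin (n + 1) → ℝ) (i j : Fin (n + 1)) :
    Phi T d i.succ j.succ
      = T i j - (if h : i.val + 1 < n + 1 ∧ j.val + 1 < n + 1
          then T ⟨i.val + 1, h.1⟩ ⟨j.val + 1, h.2⟩ else 0)
        + (if i = j then d i else 0) := by
  simp only [Phi, Matrix.add_apply, Matrix.sub_apply, embedBR_succ_succ,
    embedTL_succ_succ, sumE_succ_succ]
lemma main_eq {n : ℕ} (S : Matrix (Fin (n + 2)) (Fin (n + 2)) ℝ)
    (hS : S.IsSymm) (hsum : ∑ i, ∑ j, S i j = 0) :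
    S = Phi (TT S) (dd S) := by
  ext i j
  induction i using Fin.cases with
  | zero =>
    induction j using Fin.cases with
    | zero =>
      rw [Phi_zero_zero]
      have hTT : TT S 0 0 = tl S 1 1 + ∑ k ∈ range (n + 1), tl S 0 (k + 1) := by
        simp only [TT, Matrix.of_apply, if_pos rfl, Fin.val_zero]
        congr 1
        apply Finset.sum_congr rfl
        intro k _
        congr 1
        omega
      have hdd : (∑ ℓ, dd S ℓ) = -∑ k ∈ range (n + 1), tl S 0 (k + 1) := by
        rw [← Finset.sum_neg_distrib]
        exact Fin.sum_univ_eq_sum_range (fun k => -tl S 0 (k + 1)) (n + 1)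
      have hrec : tl S 0 0 = S 0 0 + tl S 1 1 := by
        have h := tl_rec S (i := 0) (j := 0) (by omega) (by omega)
        convert h using 3
        all_goals exact Fin.ext (by simp)
      have hL := sumL S
      rw [hsum] at hL
      have hsymm : ∀ k ∈ range (n + 1), tl S 0 (k + 1) + tl S (k + 1) 0
          = tl S 0 (k + 1) + tl S 0 (k + 1) := by
        intro k _
        rw [tl_symm hS]
      rw [Finset.sum_congr rfl hsymm] at hL
      have h2 : ∑ k ∈ range (n + 1), (tl S 0 (k + 1) + tl S 0 (k + 1))
          = 2 * ∑ k ∈ range (n + 1), tl S 0 (k + 1) := by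
        rw [Finset.sum_add_distrib]; ring
      rw [h2] at hL
      rw [hTT, hdd]
      linarith
    | succ j =>
      rw [Phi_zero_succ]
      have hrec : tl S 0 (j.val + 1) = S 0 j.succ + tl S 1 (j.val + 2) := by
        have h := tl_rec S (i := 0) (j := j.val + 1) (by omega) (by omega)
        rw [h]
        congr 2 
      have hdd : dd S j = -tl S 0 (j.val + 1) := rfl
      by_cases h : j.val + 1 < n + 1
      · rw [dif_pos h]
        have hTT : TT S 0 ⟨j.val + 1, h⟩ = tl S 1 (j.val + 2) := by
          simp only [TT, Matrix.of_apply, Fin.val_zero]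
          rw [if_neg (by intro hc; exact absurd (congrArg Fin.val hc) (by simp))]
          rw [add_zero]
        rw [hTT, hdd]
        linarith
      · rw [dif_neg h]
        have hz : tl S 1 (j.val + 2) = 0 := tl_zero S (by omega)
        rw [hdd]
        linarith
  | succ i =>
    induction j using Fin.cases with
    | zero =>
      rw [Phi_succ_zero]
      have hSsymm : S i.succ 0 = S 0 i.succ := (hS.apply _ _).symm
      have hrec : tl S 0 (i.val + 1) = S 0 i.succ + tl S (i.val + 2) 1 := by
        have h := tl_rec S (i := 0) (j := i.val + 1) (by omega) (by omega)
        rw [h, tl_symm hS]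
        congr 2
      have hdd : dd S i = -tl S 0 (i.val + 1) := rfl
      by_cases h : i.val + 1 < n + 1
      · rw [dif_pos h]
        have hTT : TT S ⟨i.val + 1, h⟩ 0 = tl S (i.val + 2) 1 := by
          simp only [TT, Matrix.of_apply, Fin.val_zero]
          rw [if_neg (by intro hc; exact absurd (congrArg Fin.val hc) (by simp))]
          rw [add_zero]
        rw [hTT, hdd, hSsymm]
        linarith
      · rw [dif_neg h]
        have hz : tl S (i.val + 2) 1 = 0 := tl_zero S (by omega)
        rw [hdd, hSsymm]
        linarith
    | succ j =>
      rw [Phi_succ_succ]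
      have hrec : tl S (i.val + 1) (j.val + 1) = S i.succ j.succ
          + tl S (i.val + 2) (j.val + 2) := by
        have h := tl_rec S (i := i.val + 1) (j := j.val + 1) (by omega) (by omega)
        rw [h]
        congr 2
      by_cases hij : i = j
      · subst hij
        rw [if_pos rfl]
        have hTTd : TT S i i = tl S (i.val + 1) (i.val + 1)
            + ∑ k ∈ range (n + 1 - i.val), tl S 0 (i.val + 1 + k) := by
          simp only [TT, Matrix.of_apply, eq_self_iff_true, if_true]
        have hdd : dd S i = -tl S 0 (i.val + 1) := rfl
        by_cases h : i.val + 1 < n + 1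
        · rw [dif_pos ⟨h, h⟩]
          have hTT2 : TT S ⟨i.val + 1, h⟩ ⟨i.val + 1, h⟩ = tl S (i.val + 2) (i.val + 2)
              + ∑ k ∈ range (n - i.val), tl S 0 (i.val + 2 + k) := by
            simp only [TT, Matrix.of_apply, eq_self_iff_true, if_true]
            congr 1
            rw [show n + 1 - (i.val + 1) = n - i.val from by omega]
          have hpeel : ∑ k ∈ range (n + 1 - i.val), tl S 0 (i.val + 1 + k)
              = tl S 0 (i.val + 1) + ∑ k ∈ range (n - i.val), tl S 0 (i.val + 2 + k) := by
            rw [show n + 1 - i.val = (n - i.val) + 1 from by omega, Finset.sum_range_succ']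
            rw [add_comm]
            congr 1
            · apply Finset.sum_congr rfl
              intro k _
              congr 1
              omega
          rw [hTTd, hTT2, hdd]
          linarith
        · rw [dif_neg (by intro hc; exact h hc.1)]
          have hz : tl S (i.val + 2) (i.val + 2) = 0 := tl_zero S (by omega)
          have hone : ∑ k ∈ range (n + 1 - i.val), tl S 0 (i.val + 1 + k)
              = tl S 0 (i.val + 1) := by
            rw [show n + 1 - i.val = 1 from by omega, Finset.sum_range_one]
          rw [hTTd, hdd, hone]
          linarith
      · rw [if_neg hij]
        have hvij : i.val ≠ j.val := fun hc => hij (Fin.ext hc)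
        have hTT : TT S i j = tl S (i.val + 1) (j.val + 1) := by
          simp only [TT, Matrix.of_apply, if_neg hij, add_zero]
        by_cases h : i.val + 1 < n + 1 ∧ j.val + 1 < n + 1
        · rw [dif_pos h]
          have hTT2 : TT S ⟨i.val + 1, h.1⟩ ⟨j.val + 1, h.2⟩
              = tl S (i.val + 2) (j.val + 2) := by
            simp only [TT, Matrix.of_apply]
            rw [if_neg (by intro hc; exact hvij (by simpa using congrArg Fin.val hc)),
              add_zero]
          rw [hTT, hTT2]
          linarith
        · rw [dif_neg h]
          have hz : tl S (i.val + 2) (j.val + 2) = 0 := tl_zero S (by omega)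
          rw [hTT]
          linarith
lemma Phi_inj {n : ℕ} {T : Matrix (Fin (n + 1)) (Fin (n + 1)) ℝ} {d : Fin (n + 1) → ℝ}
    (h : Phi T d = 0) : T = 0 ∧ d = 0 := by
  have hentry : ∀ i j : Fin (n + 2), Phi T d i j = 0 := by
    intro i j; rw [h]; rfl
  -- off-diagonal entries of T vanish
  have hoff : ∀ m : ℕ, ∀ a b : Fin (n + 1), a ≠ b → n - max a.val b.val ≤ m → T a b = 0 := by
    intro m
    induction m with
    | zero =>
      intro a b hab hm
      have h1 := hentry a.succ b.succ
      rw [Phi_succ_succ, if_neg hab,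
        dif_neg (by intro hc; omega)] at h1
      linarith
    | succ m ih =>
      intro a b hab hm
      by_cases hc : a.val + 1 < n + 1 ∧ b.val + 1 < n + 1
      · have h1 := hentry a.succ b.succ
        rw [Phi_succ_succ, if_neg hab, dif_pos hc] at h1
        have h2 : T ⟨a.val + 1, hc.1⟩ ⟨b.val + 1, hc.2⟩ = 0 := by
          apply ih
          · intro hcc
            exact hab (Fin.ext (by simpa using congrArg Fin.val hcc))
          · simp only [Fin.isValue]
            omega
        rw [h2] at h1
        linarith
      · have h1 := hentry a.succ b.succ
        rw [Phi_succ_succ, if_neg hab, dif_neg hc] at h1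
        linarith
  -- d vanishes
  have hd : ∀ ℓ : Fin (n + 1), d ℓ = 0 := by
    intro ℓ
    have h1 := hentry 0 ℓ.succ
    rw [Phi_zero_succ] at h1
    by_cases hc : ℓ.val + 1 < n + 1
    · rw [dif_pos hc] at h1
      have h2 : T 0 ⟨ℓ.val + 1, hc⟩ = 0 := by
        apply hoff n
        · intro hcc
          exact absurd (congrArg Fin.val hcc) (by simp)
        · omega
      rw [h2] at h1
      linarith
    · rw [dif_neg hc] at h1
      linarith
  -- diagonal entries of T vanish
  have hdiag : ∀ m : ℕ, ∀ a : Fin (n + 1), n - a.val ≤ m → T a a = 0 := by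
    intro m
    induction m with
    | zero =>
      intro a hm
      have h1 := hentry a.succ a.succ
      rw [Phi_succ_succ, if_pos rfl, hd a,
        dif_neg (by intro hc; omega)] at h1
      linarith
    | succ m ih =>
      intro a hm
      by_cases hc : a.val + 1 < n + 1
      · have h1 := hentry a.succ a.succ
        rw [Phi_succ_succ, if_pos rfl, hd a, dif_pos ⟨hc, hc⟩] at h1
        have h2 : T ⟨a.val + 1, hc⟩ ⟨a.val + 1, hc⟩ = 0 := by
          apply ih
          simp only []
          omega
        rw [h2] at h1
        linarith
      · have h1 := hentry a.succ a.succ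
        rw [Phi_succ_succ, if_pos rfl, hd a, dif_neg (by intro hcc; exact hc hcc.1)] at h1
        linarith
  constructor
  · ext a b
    rw [Matrix.zero_apply]
    by_cases hab : a = b
    · subst hab; exact hdiag n a (by omega)
    · exact hoff n a b hab (by omega)
  · funext ℓ
    exact hd ℓ

lemma Phi_sub {n : ℕ} (T T' : Matrix (Fin (n + 1)) (Fin (n + 1)) ℝ)
    (d d' : Fin (n + 1) → ℝ) : Phi T d - Phi T' d' = Phi (T - T') (d - d') := by
  have hBR : embedBR (T - T') = embedBR T - embedBR T' := by
    ext i j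
    simp only [embedBR, Matrix.of_apply, Matrix.sub_apply]
    split_ifs <;> simp [Matrix.sub_apply]
  have hTL : embedTL (T - T') = embedTL T - embedTL T' := by
    ext i j
    simp only [embedTL, Matrix.of_apply, Matrix.sub_apply]
    split_ifs <;> simp [Matrix.sub_apply]
  have hE : (∑ ℓ : Fin (n + 1), (d - d') ℓ • Emat ℓ)
      = (∑ ℓ : Fin (n + 1), d ℓ • Emat ℓ) - ∑ ℓ : Fin (n + 1), d' ℓ • Emat ℓ := by
    rw [← Finset.sum_sub_distrib]
    apply Finset.sum_congr rfl
    intro ℓ _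
    rw [Pi.sub_apply, sub_smul]
  rw [Phi, Phi, Phi, hBR, hTL, hE]
  abel
/-- Lemma A.1 of the paper: decomposition of a symmetric matrix with zero total sum. -/
theorem stmt1 (n : ℕ) (S : Matrix (Fin (n + 2)) (Fin (n + 2)) ℝ)
    (hS : S.IsSymm) (hsum : ∑ i, ∑ j, S i j = 0) :
    ∃! Sd : Matrix (Fin (n + 1)) (Fin (n + 1)) ℝ × (Fin (n + 1) → ℝ),
      Sd.1.IsSymm ∧
        S = embedBR Sd.1 - embedTL Sd.1 + ∑ ℓ : Fin (n + 1), Sd.2 ℓ • Emat ℓ := by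
  refine ⟨(TT S, dd S), ⟨TT_isSymm hS, main_eq S hS hsum⟩, ?_⟩
  rintro ⟨T, d⟩ ⟨hTsymm, hTeq⟩
  have e1 : Phi T d = S := hTeq.symm
  have e2 : Phi (TT S) (dd S) = S := (main_eq S hS hsum).symm
  have h0 : Phi (T - TT S) (d - dd S) = 0 := by
    rw [← Phi_sub, e1, e2, sub_self]
  obtain ⟨hT0, hd0⟩ := Phi_inj h0
  have hT : T = TT S := sub_eq_zero.mp hT0
  have hd : d = dd S := sub_eq_zero.mp hd0
  rw [Prod.ext_iff]
  exact ⟨hT, hd⟩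
end

section
/- Let m ≥ 2, let S̃ be a real symmetric (m−1)×(m−1) matrix and d₁,…,d_{m−1} real numbers such that the matrix: (embedding of S̃ in the bottom-right block) − (embedding of S̃ in the top-left block) + Σ_{ℓ=1}^{m−1} d_ℓ E_ℓ equals the zero matrix, where E_ℓ has entries 1 at positions (1,1) and (1+ℓ,1+ℓ), −1 at positions (1,1+ℓ) and (1+ℓ,1), and 0 elsewhere. Then S̃ = 0 and d₁ = ⋯ = d_{m−1} = 0. -/
/-- Injectivity step in the proof of Lemma A.1 of the paper: if the decomposition
vanishes then `S̃ = 0` and all `dₗ = 0`. -/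
theorem stmt3 (n : ℕ) (St : Matrix (Fin (n + 1)) (Fin (n + 1)) ℝ) (hSt : St.IsSymm)
    (d : Fin (n + 1) → ℝ)
    (h : embedBR St - embedTL St + ∑ ℓ : Fin (n + 1), d ℓ • Emat ℓ = 0) :
    St = 0 ∧ d = 0 := by
  have key : ∀ i j : Fin (n+2),
      embedBR St i j - embedTL St i j + ∑ ℓ, d ℓ * Emat ℓ i j = 0 := by
    intro i j
    have := congrFun (congrFun h i) j
    simpa [Matrix.sum_apply, Matrix.sub_apply, Matrix.add_apply, Matrix.smul_apply,
      smul_eq_mul] using this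
  -- entry (i.succ, j.succ)
  have hBR : ∀ i j : Fin (n+1), embedBR St i.succ j.succ = St i j := by
    intro i j
    simp only [embedBR, Matrix.of_apply, Fin.val_succ]
    rw [dif_pos (by omega), dif_pos (by omega)]
    congr 1
  have hsumSS : ∀ i j : Fin (n+1),
      (∑ ℓ, d ℓ * Emat ℓ i.succ j.succ) = if i = j then d i else 0 := by
    intro i j
    rcases eq_or_ne i j with rfl | hij
    · rw [if_pos rfl]
      rw [Finset.sum_eq_single i]
      · simp [Emat, Fin.succ_ne_zero]
      · intro b _ hb
        simp [Emat, Fin.succ_ne_zero, (Fin.succ_injective _).ne (Ne.symm hb)]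
      · simp
    · rw [if_neg hij]
      apply Finset.sum_eq_zero
      intro ℓ _
      simp only [Emat, Matrix.of_apply, Fin.succ_ne_zero, false_and, and_false, if_false,
        or_self, Fin.succ_inj]
      rcases eq_or_ne i ℓ with rfl | hiℓ
      · rw [if_neg (by tauto), mul_zero]
      · rw [if_neg (by tauto), mul_zero]
  have hsum0S : ∀ j : Fin (n+1), (∑ ℓ, d ℓ * Emat ℓ 0 j.succ) = - d j := by
    intro j
    rw [Finset.sum_eq_single j]
    · simp [Emat, (Fin.succ_ne_zero j).symm, (Fin.succ_ne_zero j)]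
    · intro b _ hb
      have h1 : j.succ ≠ b.succ := (Fin.succ_injective _).ne (Ne.symm hb)
      simp [Emat, (Fin.succ_ne_zero b).symm, h1, Fin.succ_ne_zero j]
    · simp
  have hsum00 : (∑ ℓ, d ℓ * Emat ℓ (0 : Fin (n+2)) 0) = ∑ ℓ, d ℓ := by
    apply Finset.sum_congr rfl
    intro ℓ _
    simp [Emat]
  -- interior relation
  have rel : ∀ (i j : Fin (n+1)) (hi : i.val < n) (hj : j.val < n),
      St i j - St ⟨i.val+1, by omega⟩ ⟨j.val+1, by omega⟩ + (if i = j then d i else 0) = 0 := by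
    intro i j hi hj
    have hk := key i.succ j.succ
    rw [hBR, hsumSS] at hk
    simp only [embedTL, Matrix.of_apply, Fin.val_succ] at hk
    rw [dif_pos (by omega : i.val + 1 < n + 1), dif_pos (by omega : j.val + 1 < n + 1)] at hk
    exact hk
  -- edge relation
  have relEdge : ∀ (i j : Fin (n+1)), i ≠ j → (i.val = n ∨ j.val = n) → St i j = 0 := by
    intro i j hij hedge
    have hk := key i.succ j.succ
    rw [hBR, hsumSS, if_neg hij] at hk
    simp only [embedTL, Matrix.of_apply, Fin.val_succ] at hk
    split_ifs at hk with h1 h2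
    · omega
    · linarith
    · linarith
  -- corner relation
  have relCorner : St (Fin.last n) (Fin.last n) + d (Fin.last n) = 0 := by
    have hk := key (Fin.last n).succ (Fin.last n).succ
    rw [hBR, hsumSS, if_pos rfl] at hk
    simp only [embedTL, Matrix.of_apply, Fin.val_succ, Fin.val_last] at hk
    rw [dif_neg (by omega)] at hk
    linarith
  -- first row relation
  have relRow0 : ∀ (j : Fin (n+1)) (hj : j.val < n), St 0 ⟨j.val+1, by omega⟩ = - d j := by
    intro j hj
    have hk := key 0 j.succ
    rw [hsum0S] at hk
    simp only [embedBR, embedTL, Matrix.of_apply, Fin.val_succ] at hk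
    rw [dif_neg (by simp)] at hk
    rw [dif_pos (by simp), dif_pos (by simp; omega)] at hk
    simp only [Fin.val_zero] at hk
    have : St ⟨0, by omega⟩ ⟨j.val+1, by omega⟩ = St 0 ⟨j.val+1, by omega⟩ := rfl
    linarith [hk]
  -- d last = 0
  have hdlast : d (Fin.last n) = 0 := by
    have hk := key 0 (Fin.last n).succ
    rw [hsum0S] at hk
    simp only [embedBR, embedTL, Matrix.of_apply, Fin.val_succ, Fin.val_last] at hk
    rw [dif_neg (by simp)] at hk
    rw [dif_pos (by simp), dif_neg (by omega : ¬ (n + 1 < n + 1))] at hk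
    linarith
  -- corner (0,0)
  have rel00 : St 0 0 = ∑ ℓ, d ℓ := by
    have hk := key 0 0
    rw [hsum00] at hk
    simp only [embedBR, embedTL, Matrix.of_apply] at hk
    rw [dif_neg (by simp)] at hk
    rw [dif_pos (by simp), dif_pos (by simp)] at hk
    simp only [Fin.val_zero] at hk
    have : St ⟨0, by omega⟩ ⟨0, by omega⟩ = St 0 0 := rfl
    linarith [hk]
  -- all off-diagonal entries above the diagonal vanish
  have offU : ∀ (k : ℕ) (i j : Fin (n+1)), i.val < j.val → n - j.val ≤ k → St i j = 0 := by
    intro k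
    induction k with
    | zero =>
      intro i j hij hk
      have hjn : j.val = n := by have := j.isLt; omega
      exact relEdge i j (Fin.ne_of_val_ne (by omega)) (Or.inr hjn)
    | succ k ih =>
      intro i j hij hk
      by_cases hn : j.val = n
      · exact relEdge i j (Fin.ne_of_val_ne (by omega)) (Or.inr hn)
      · have hj : j.val < n := by have := j.isLt; omega
        have hi : i.val < n := by omega
        have hr := rel i j hi hj
        rw [if_neg (Fin.ne_of_val_ne (by omega))] at hr
        have hnext := ih ⟨i.val+1, by omega⟩ ⟨j.val+1, by omega⟩ (by simpa using by omega)
          (by simp; omega)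
        rw [hnext] at hr
        linarith
  have hsymm : ∀ i j : Fin (n+1), St j i = St i j := by
    intro i j
    have := congrFun (congrFun hSt i) j
    simpa [Matrix.transpose_apply] using this
  have offdiag : ∀ i j : Fin (n+1), i ≠ j → St i j = 0 := by
    intro i j hij
    rcases lt_trichotomy i.val j.val with hlt | heq | hgt
    · exact offU _ i j hlt le_rfl
    · exact absurd (Fin.ext heq) hij
    · rw [← hsymm]
      exact offU _ j i hgt le_rfl
  -- all d vanish
  have hd : d = 0 := by
    funext j
    by_cases hj : j.val < n
    · have h1 := relRow0 j hj
      have h2 : St 0 ⟨j.val+1, by omega⟩ = 0 :=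
        offdiag _ _ (Fin.ne_of_val_ne (by simp))
      rw [h2] at h1
      simpa using h1.symm
    · have hjl : j = Fin.last n := Fin.ext (by have := j.isLt; simp [Fin.last]; omega)
      rw [hjl]
      exact hdlast
  -- diagonal entries vanish
  have diagAux : ∀ (k : ℕ) (i : Fin (n+1)), n - i.val ≤ k → St i i = 0 := by
    intro k
    induction k with
    | zero =>
      intro i hk
      have : i = Fin.last n := Fin.ext (by have := i.isLt; simp [Fin.last]; omega)
      rw [this]
      have := relCorner
      rw [hdlast] at this
      linarith
    | succ k ih =>
      intro i hk
      by_cases hn : i.val = n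
      · have : i = Fin.last n := Fin.ext (by simpa [Fin.last])
        rw [this]
        have := relCorner
        rw [hdlast] at this
        linarith
      · have hi : i.val < n := by have := i.isLt; omega
        have hr := rel i i hi hi
        rw [if_pos rfl] at hr
        have hd0 : d i = 0 := by rw [hd]; rfl
        have hnext := ih ⟨i.val+1, by omega⟩ (by simp; omega)
        rw [hnext, hd0] at hr
        linarith
  refine ⟨?_, hd⟩
  ext i j
  rcases eq_or_ne i j with rfl | hij
  · simpa using diagAux n i (by omega)
  · simpa using offdiag i j hij
end

section
/- Let r ≥ 1, p ≥ 0 and a_{−r},…,a_p real coefficients. Fix integers J ≥ 1 and N ≥ 1 with Np ≤ J/2. Suppose (u_j^n)_{j ≤ J+p, 0 ≤ n ≤ N} satisfies the recursion u_j^{n+1} = Σ_{ℓ=−r}^p a_ℓ u_{j+ℓ}^n for all j ≤ J and 0 ≤ n ≤ N−1 (with u_j^n for J < j ≤ J+p determined by arbitrary boundary conditions), and suppose the initial data satisfy u_j^0 = 0 for all j ≤ J/2. Then u_ℓ^n = 0 for all 0 ≤ n ≤ N and all ℓ ≤ J/2 − Np + (N−n)p; in particular u_ℓ^n = 0 for ℓ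 = 1−r,…,0 and all n ≤ N. -/
/-- Finite speed of propagation to the left: if the initial data vanish for
`j ≤ J/2`, then `u_ℓ^n = 0` for `ℓ ≤ J/2 − Np + (N−n)p`; in particular the
solution satisfies the homogeneous Dirichlet condition `u_ℓ^n = 0` for
`ℓ = 1−r,…,0` up to time `N`. -/
theorem stmt14 (r p : ℕ) (hr : 1 ≤ r) (a : ℤ → ℝ) (J N : ℕ)
    (hJ : 1 ≤ J) (hN : 1 ≤ N) (hJeven : Even J)
    (hNp : (N : ℤ) * (p : ℤ) ≤ (J : ℤ) / 2)
    (u : ℕ → ℤ → ℝ)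
    (hrec : ∀ n : ℕ, n < N → ∀ j : ℤ, j ≤ (J : ℤ) →
      u (n + 1) j = ∑ ℓ ∈ Finset.Icc (-(r : ℤ)) (p : ℤ), a ℓ * u n (j + ℓ))
    (hinit : ∀ j : ℤ, j ≤ (J : ℤ) / 2 → u 0 j = 0) :
    (∀ n : ℕ, n ≤ N → ∀ ℓ : ℤ,
        ℓ ≤ (J : ℤ) / 2 - (N : ℤ) * p + ((N : ℤ) - (n : ℤ)) * p → u n ℓ = 0) ∧
      ∀ n : ℕ, n ≤ N → ∀ ℓ : ℤ, 1 - (r : ℤ) ≤ ℓ → ℓ ≤ 0 → u n ℓ = 0 := by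
  have key : ∀ n : ℕ, n ≤ N → ∀ ℓ : ℤ, ℓ ≤ (J : ℤ) / 2 - (n : ℤ) * p → u n ℓ = 0 := by
    intro n
    induction n with
    | zero =>
      intro _ ℓ hℓ
      exact hinit ℓ (by simpa using hℓ)
    | succ n ih =>
      intro hn ℓ hℓ
      have hnN : n < N := Nat.lt_of_succ_le hn
      have hnp : (n : ℤ) * p ≤ (N : ℤ) * p := by
        have : (n : ℤ) ≤ N := by exact_mod_cast Nat.le_of_lt hnN
        exact mul_le_mul_of_nonneg_right this (by positivity)
      have hJ2 : (J : ℤ) / 2 ≤ (J : ℤ) := by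
        have : (0 : ℤ) ≤ (J : ℤ) := by positivity
        omega
      have hℓJ : ℓ ≤ (J : ℤ) := by
        have : ((n : ℤ) + 1) * p ≤ (N : ℤ) * p := by
          have : ((n : ℤ) + 1) ≤ N := by exact_mod_cast hn
          exact mul_le_mul_of_nonneg_right this (by positivity)
        push_cast at hℓ
        have hp0 : (0 : ℤ) ≤ p := by positivity
        nlinarith
      rw [hrec n hnN ℓ hℓJ]
      apply Finset.sum_eq_zero
      intro k hk
      simp only [Finset.mem_Icc] at hk
      have : u n (ℓ + k) = 0 := by
        apply ih (Nat.le_of_lt hnN)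
        push_cast at hℓ ⊢
        nlinarith [hk.2]
      rw [this, mul_zero]
  constructor
  · intro n hn ℓ hℓ
    apply key n hn
    have : (J : ℤ) / 2 - (N : ℤ) * p + ((N : ℤ) - (n : ℤ)) * p = (J : ℤ) / 2 - (n : ℤ) * p := by
      ring
    omega
  · intro n hn ℓ _ hℓ0
    apply key n hn
    have hnp : (n : ℤ) * p ≤ (N : ℤ) * p := by
      have : (n : ℤ) ≤ N := by exact_mod_cast hn
      exact mul_le_mul_of_nonneg_right this (by positivity)
    omega
end

section
/- Let a > 0, λ > 0, p ≥ 0 and let a₀,…,a_p (i.e. r = 0) be real numbers satisfying Σ_{ℓ=0}^p a_ℓ = 1, Σ_{ℓ=0}^p ℓ a_ℓ = −λa, and sup_{θ∈[0,2π]} |Σ_{ℓ=0}^p a_ℓ e^{iℓθ}| ≤ 1. Then a contradiction follows; equivalently, any ℓ²-stable conservative first-order-consistent scheme for ∂_t u + a∂_x u = 0 with a > 0 must have r ≥ 1. -/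
/-- An `ℓ²`-stable conservative first-order-consistent scheme for
`∂ₜu + a∂ₓu = 0` with `a > 0` cannot have `r = 0`: the three conditions with a
purely right-sided stencil are contradictory. -/
theorem stmt17 (p : ℕ) (lam a : ℝ) (hlam : 0 < lam) (ha : 0 < a) (c : ℕ → ℝ)
    (h0 : ∑ ℓ ∈ Finset.range (p + 1), c ℓ = 1)
    (h1 : ∑ ℓ ∈ Finset.range (p + 1), (ℓ : ℝ) * c ℓ = -(lam * a))
    (hstab : ∀ θ ∈ Set.Icc (0 : ℝ) (2 * Real.pi),
      ‖∑ ℓ ∈ Finset.range (p + 1),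
          (c ℓ : ℂ) * Complex.exp (Complex.I * (ℓ : ℂ) * (θ : ℂ))‖ ≤ 1) :
    False := by
  set f : ℂ → ℂ := fun z => ∑ ℓ ∈ Finset.range (p+1), (c ℓ : ℂ) * z ^ ℓ with hf
  have hdiff : Differentiable ℂ f := by
    apply Differentiable.fun_sum
    intro i _
    exact (differentiable_const _).mul (differentiable_pow i)
  have hsphere : ∀ z ∈ Metric.sphere (0:ℂ) 1, ‖f z‖ ≤ 1 := by
    intro z hz
    have hz1 : ‖z‖ = 1 := by
      simpa [Complex.dist_eq] using hz
    have hzeq : Complex.exp (Complex.arg z * Complex.I) = z := by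
      have := Complex.norm_mul_exp_arg_mul_I z
      rwa [hz1, Complex.ofReal_one, one_mul] at this
    -- choose θ ∈ [0, 2π] with exp(θ I) = z
    obtain ⟨θ, hθmem, hθeq⟩ : ∃ θ : ℝ, θ ∈ Set.Icc (0:ℝ) (2*Real.pi) ∧
        Complex.exp (θ * Complex.I) = z := by
      rcases le_or_gt 0 (Complex.arg z) with h | h
      · exact ⟨Complex.arg z, ⟨h, (Complex.arg_le_pi z).trans (by nlinarith [Real.pi_pos])⟩, hzeq⟩
      · refine ⟨Complex.arg z + 2 * Real.pi, ⟨?_, ?_⟩, ?_⟩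
        · nlinarith [Complex.neg_pi_lt_arg z]
        · nlinarith [Complex.arg_le_pi z, h]
        · push_cast
          rw [add_mul, Complex.exp_add, hzeq, Complex.exp_two_pi_mul_I, mul_one]
    have hkey := hstab θ hθmem
    have : ∀ ℓ : ℕ, Complex.exp (Complex.I * (ℓ : ℂ) * (θ : ℂ)) = z ^ ℓ := by
      intro ℓ
      rw [← hθeq, ← Complex.exp_nat_mul]
      ring_nf
    simp only [this] at hkey
    exact hkey
  have hball : ∀ z ∈ Metric.closedBall (0:ℂ) 1, ‖f z‖ ≤ 1 := by
    intro z hz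
    have hU : Bornology.IsBounded (Metric.ball (0:ℂ) 1) := Metric.isBounded_ball
    have hcl : z ∈ closure (Metric.ball (0:ℂ) 1) := by
      rwa [closure_ball _ one_ne_zero]
    refine Complex.norm_le_of_forall_mem_frontier_norm_le hU hdiff.diffContOnCl ?_ hcl
    intro w hw
    apply hsphere
    rwa [frontier_ball _ one_ne_zero] at hw
  -- real bound on [0,1]
  have hreal : ∀ x : ℝ, |x| ≤ 1 → |∑ ℓ ∈ Finset.range (p+1), c ℓ * x ^ ℓ| ≤ 1 := by
    intro x hx
    have hmem : (x : ℂ) ∈ Metric.closedBall (0:ℂ) 1 := by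
      simp [Complex.dist_eq, Complex.norm_real, hx]
    have := hball x hmem
    have heq : f (x : ℂ) = ((∑ ℓ ∈ Finset.range (p+1), c ℓ * x ^ ℓ : ℝ) : ℂ) := by
      simp [hf]
    rw [heq, Complex.norm_real] at this
    simpa using this
  -- endgame
  set S : ℝ → ℝ := fun x => ∑ ℓ ∈ Finset.range (p+1), c ℓ * (∑ i ∈ Finset.range ℓ, x ^ i) with hS
  have hScont : Continuous S := by
    apply continuous_finset_sum
    intro i _
    exact continuous_const.mul (continuous_finset_sum _ fun j _ => continuous_pow j)
  have hS1 : S 1 = -(lam * a) := by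
    rw [← h1, hS]
    simp [mul_comm]
  have hSneg : ∃ x : ℝ, 0 < x ∧ x < 1 ∧ S x < 0 := by
    have hc : ContinuousAt S 1 := hScont.continuousAt
    rw [Metric.continuousAt_iff] at hc
    obtain ⟨δ, hδ, hd⟩ := hc (lam * a) (by positivity)
    refine ⟨max (1/2) (1 - δ/2), lt_of_lt_of_le (by norm_num) (le_max_left _ _), ?_, ?_⟩
    · apply max_lt (by norm_num) (by linarith)
    · have hdist : dist (max (1/2) (1 - δ/2)) 1 < δ := by
        rw [Real.dist_eq, abs_lt]
        constructor
        · have := le_max_right (1/2 : ℝ) (1 - δ/2); linarith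
        · have := le_max_left (1/2 : ℝ) (1 - δ/2)
          have h2 : max (1/2 : ℝ) (1 - δ/2) < 1 := max_lt (by norm_num) (by linarith)
          linarith
      have := hd hdist
      rw [hS1, Real.dist_eq] at this
      have := abs_lt.mp this
      linarith [this.1]
  obtain ⟨x, hx0, hx1, hSx⟩ := hSneg
  have hfx : ∑ ℓ ∈ Finset.range (p+1), c ℓ * x ^ ℓ = 1 - (1 - x) * S x := by
    have hmul : (1 - x) * S x = ∑ ℓ ∈ Finset.range (p+1), c ℓ * (1 - x ^ ℓ) := by
      rw [hS, Finset.mul_sum]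
      refine Finset.sum_congr rfl fun ℓ _ => ?_
      have hg : (∑ i ∈ Finset.range ℓ, x ^ i) * (x - 1) = x ^ ℓ - 1 := geom_sum_mul x ℓ
      linear_combination (-(c ℓ)) * hg
    have hsplit : ∑ ℓ ∈ Finset.range (p+1), c ℓ * (1 - x ^ ℓ)
        = (∑ ℓ ∈ Finset.range (p+1), c ℓ) - ∑ ℓ ∈ Finset.range (p+1), c ℓ * x ^ ℓ := by
      rw [← Finset.sum_sub_distrib]
      exact Finset.sum_congr rfl fun ℓ _ => by ring
    rw [hmul, hsplit, h0]; ring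
  have hgt : (1:ℝ) < ∑ ℓ ∈ Finset.range (p+1), c ℓ * x ^ ℓ := by
    rw [hfx]; nlinarith
  have := hreal x (by rw [abs_le]; constructor <;> linarith)
  rw [abs_le] at this
  linarith [this.2]
end
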